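/- Let {P(t)}_{t≥0} be N×N row-stochastic matrices satisfying τ(P(t,t₀)) ≤ Cλ^{t−t₀} for constants C > 0, 0 < λ < 1, and suppose the gradients G(t) ∈ ℝ^{N×d} satisfy sup_t ‖G(t)‖_∞ ≤ L and the nonnegative diagonal matrices Δ(t) satisfy sup_t ‖Δ(t)‖_∞ < ∞. If X(t+1) = P(t)X(t) − Δ(t)G(t) and b(t) ∈ ℝ^N are vectors with sup_t ‖b(t)‖₁ < ∞ and b(t)^⊤ 1_N = 0, then ‖X(t)^⊤ b(t)‖₁ ≤ C'λ^t + C'·Σ_{k=0}^{t−1} λ^{t−k−1}‖Δ(k)‖_∞ for some constant C' > 0 independent of t ≥ 1. -/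

import Mathlib

noncomputable def tau {N : ℕ} (P : Matrix (Fin N) (Fin N) ℝ) : ℝ :=
  (1 / 2) * ⨆ p : Fin N × Fin N, ∑ j, |P p.1 j - P p.2 j|

/-- Backward product: `bprod P t₀ k = P(t₀+k-1) ⋯ P(t₀+1) P(t₀)`, i.e. `P(t₀+k, t₀)`. -/
def bprod {N : ℕ} (P : ℕ → Matrix (Fin N) (Fin N) ℝ) (t₀ : ℕ) : ℕ → Matrix (Fin N) (Fin N) ℝ
  | 0 => 1
  | k + 1 => P (t₀ + k) * bprod P t₀ k

lemma tau_pair_le {N : ℕ} (Q : Matrix (Fin N) (Fin N) ℝ) (p q : Fin N) :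
    ∑ j, |Q p j - Q q j| ≤ 2 * tau Q := by
  have h := le_ciSup (f := fun r : Fin N × Fin N => ∑ j, |Q r.1 j - Q r.2 j|)
    (Set.Finite.bddAbove (Set.finite_range _)) (p, q)
  simp only [tau]
  linarith

lemma tau_nonneg {N : ℕ} (hN : 0 < N) (Q : Matrix (Fin N) (Fin N) ℝ) : 0 ≤ tau Q := by
  have i0 : Fin N := ⟨0, hN⟩
  have h := tau_pair_le Q i0 i0
  have h2 : (0:ℝ) ≤ ∑ j, |Q i0 j - Q i0 j| := Finset.sum_nonneg fun _ _ => abs_nonneg _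
  linarith

lemma key {N : ℕ} (u : Fin N → ℝ) (hu : ∑ i, u i = 0)
    (Q : Matrix (Fin N) (Fin N) ℝ) :
    ∑ j, |∑ i, u i * Q i j| ≤ tau Q * ∑ i, |u i| := by
  set up : Fin N → ℝ := fun i => max (u i) 0 with hup
  set un : Fin N → ℝ := fun i => max (-u i) 0 with hun
  have hdiff : ∀ i, u i = up i - un i := by
    intro i; simp [hup, hun, max_def]; split_ifs <;> linarith
  have habs : ∀ i, |u i| = up i + un i := by
    intro i; simp [hup, hun, max_def, abs]
    rcases le_total (u i) 0 with h | h
    · simp [h]; intro h'; linarith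
    · simp [h]; split_ifs <;> linarith
  set s : ℝ := ∑ i, up i with hs
  have hsn : ∑ i, un i = s := by
    have : ∑ i, (up i - un i) = ∑ i, u i := Finset.sum_congr rfl fun i _ => (hdiff i).symm
    rw [hu] at this
    rw [Finset.sum_sub_distrib] at this; linarith
  have hs0 : 0 ≤ s := Finset.sum_nonneg fun i _ => le_max_right _ _
  have habs_sum : ∑ i, |u i| = 2 * s := by
    rw [Finset.sum_congr rfl fun i _ => habs i, Finset.sum_add_distrib, hsn]; ring
  have hid : ∀ j, s * ∑ i, u i * Q i j = ∑ p, ∑ q, up p * un q * (Q p j - Q q j) := by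
    intro j
    have e1 : ∑ p, ∑ q, up p * un q * (Q p j - Q q j)
        = (∑ p, up p * Q p j) * s - s * ∑ q, un q * Q q j := by
      have h1 : ∀ p : Fin N, ∑ q, up p * un q * (Q p j - Q q j)
          = up p * Q p j * (∑ q, un q) - up p * ∑ q, un q * Q q j := by
        intro p
        rw [Finset.mul_sum, Finset.mul_sum, ← Finset.sum_sub_distrib]
        exact Finset.sum_congr rfl fun q _ => by ring
      rw [Finset.sum_congr rfl fun p _ => h1 p, Finset.sum_sub_distrib, hsn,
        ← Finset.sum_mul, ← Finset.sum_mul, ← hs]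
    have e2 : ∑ i, u i * Q i j = ∑ i, up i * Q i j - ∑ i, un i * Q i j := by
      rw [← Finset.sum_sub_distrib]
      exact Finset.sum_congr rfl fun i _ => by rw [hdiff i]; ring
    rw [e1, e2]; ring
  rcases eq_or_lt_of_le hs0 with hz | hpos
  · have hu0 : ∀ i, u i = 0 := by
      intro i
      have h1 : up i = 0 := by
        have := Finset.sum_eq_zero_iff_of_nonneg (fun i _ => le_max_right (u i) 0) |>.mp hz.symm
        exact this i (Finset.mem_univ i)
      have h2 : un i = 0 := by
        have := Finset.sum_eq_zero_iff_of_nonneg (fun i _ => le_max_right (-u i) 0) |>.mp (hsn.trans hz.symm)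
        exact this i (Finset.mem_univ i)
      have := hdiff i; rw [h1, h2] at this; linarith
    simp [hu0]
  · have hmain : s * ∑ j, |∑ i, u i * Q i j| ≤ s * (tau Q * ∑ i, |u i|) := by
      calc s * ∑ j, |∑ i, u i * Q i j| = ∑ j, |s * ∑ i, u i * Q i j| := by
              rw [Finset.mul_sum]; congr 1; ext j; rw [abs_mul, abs_of_nonneg hs0]
        _ = ∑ j, |∑ p, ∑ q, up p * un q * (Q p j - Q q j)| := by
              congr 1; ext j; rw [hid j]
        _ ≤ ∑ j, ∑ p, ∑ q, |up p * un q * (Q p j - Q q j)| := by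
              apply Finset.sum_le_sum; intro j _
              exact (Finset.abs_sum_le_sum_abs _ _).trans
                (Finset.sum_le_sum fun p _ => Finset.abs_sum_le_sum_abs _ _)
        _ = ∑ p, ∑ q, up p * un q * ∑ j, |Q p j - Q q j| := by
              rw [Finset.sum_comm]; congr 1; ext p; rw [Finset.sum_comm]; congr 1; ext q
              rw [Finset.mul_sum]; congr 1; ext j
              rw [abs_mul, abs_mul, abs_of_nonneg (le_max_right _ _),
                abs_of_nonneg (le_max_right _ _)]
        _ ≤ ∑ p, ∑ q, up p * un q * (2 * tau Q) := by
              apply Finset.sum_le_sum; intro p _; apply Finset.sum_le_sum; intro q _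
              exact mul_le_mul_of_nonneg_left (tau_pair_le Q p q)
                (mul_nonneg (le_max_right _ _) (le_max_right _ _))
        _ = (∑ p, up p * (∑ q, un q)) * (2 * tau Q) := by
              rw [Finset.sum_mul]
              exact Finset.sum_congr rfl fun p _ => by
                rw [← Finset.sum_mul, ← Finset.mul_sum]
        _ = s * (tau Q * ∑ i, |u i|) := by
              rw [hsn, ← Finset.sum_mul, ← hs, habs_sum]; ring
    exact le_of_mul_le_mul_left hmain hpos

lemma sum_mul_one {N : ℕ} (v : Fin N → ℝ) (j : Fin N) :
    ∑ i, v i * (1 : Matrix (Fin N) (Fin N) ℝ) i j = v j := by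
  simp [Matrix.one_apply]

lemma sum_mul_mul {N : ℕ} (v : Fin N → ℝ) (A B : Matrix (Fin N) (Fin N) ℝ) (j : Fin N) :
    ∑ i, (∑ m, v m * A m i) * B i j = ∑ m, v m * (A * B) m j := by
  simp_rw [Matrix.mul_apply, Finset.mul_sum, Finset.sum_mul, mul_assoc]
  exact Finset.sum_comm

lemma unroll {N d : ℕ} (P : ℕ → Matrix (Fin N) (Fin N) ℝ)
    (X G : ℕ → Matrix (Fin N) (Fin d) ℝ) (Δ : ℕ → Fin N → ℝ)
    (hX : ∀ t i l, X (t + 1) i l = (∑ j, P t i j * X t j l) - Δ t i * G t i l) :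
    ∀ (t : ℕ) (v : Fin N → ℝ) (l : Fin d),
      ∑ i, v i * X t i l =
        (∑ j, (∑ i, v i * bprod P 0 t i j) * X 0 j l) -
        ∑ k ∈ Finset.range t, ∑ i,
          (∑ m, v m * bprod P (k + 1) (t - (k + 1)) m i) * (Δ k i * G k i l) := by
  intro t
  induction t with
  | zero =>
    intro v l
    simp [bprod, sum_mul_one]
  | succ t ih =>
    intro v l
    set w : Fin N → ℝ := fun j => ∑ i, v i * P t i j with hw
    have step : ∑ i, v i * X (t + 1) i l
        = (∑ j, w j * X t j l) - ∑ i, v i * (Δ t i * G t i l) := by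
      simp_rw [hX t, mul_sub, Finset.sum_sub_distrib]
      congr 1
      simp_rw [hw, Finset.mul_sum, Finset.sum_mul]
      rw [Finset.sum_comm]
      simp_rw [mul_assoc]
    rw [step, ih w l]
    have e1 : ∀ j, ∑ i, w i * bprod P 0 t i j = ∑ i, v i * bprod P 0 (t + 1) i j := by
      intro j
      have : bprod P 0 (t + 1) = P t * bprod P 0 t := by simp [bprod]
      rw [this, ← sum_mul_mul]
    have e2 : ∀ k, k ∈ Finset.range t → ∀ i : Fin N,
        (∑ m, w m * bprod P (k + 1) (t - (k + 1)) m i)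
          = ∑ m, v m * bprod P (k + 1) (t + 1 - (k + 1)) m i := by
      intro k hk i
      rw [Finset.mem_range] at hk
      have h1 : t + 1 - (k + 1) = (t - (k + 1)) + 1 := by omega
      have h2 : bprod P (k + 1) ((t - (k + 1)) + 1)
          = P t * bprod P (k + 1) (t - (k + 1)) := by
        have : (k + 1) + (t - (k + 1)) = t := by omega
        simp [bprod, this]
      rw [h1, h2, ← sum_mul_mul]
    have e3 : ∑ i, v i * (Δ t i * G t i l)
        = ∑ i, (∑ m, v m * bprod P (t + 1) (t + 1 - (t + 1)) m i) * (Δ t i * G t i l) := by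
      apply Finset.sum_congr rfl
      intro i _
      have : t + 1 - (t + 1) = 0 := by omega
      rw [this]
      show v i * _ = _
      rw [show bprod P (t+1) 0 = 1 from rfl, sum_mul_one]
    rw [Finset.sum_range_succ]
    have e4 : ∑ j, (∑ i, w i * bprod P 0 t i j) * X 0 j l
        = ∑ j, (∑ i, v i * bprod P 0 (t + 1) i j) * X 0 j l :=
      Finset.sum_congr rfl fun j _ => by rw [e1 j]
    have e5 : ∑ k ∈ Finset.range t, ∑ i,
          (∑ m, w m * bprod P (k + 1) (t - (k + 1)) m i) * (Δ k i * G k i l)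
        = ∑ k ∈ Finset.range t, ∑ i,
          (∑ m, v m * bprod P (k + 1) (t + 1 - (k + 1)) m i) * (Δ k i * G k i l) :=
      Finset.sum_congr rfl fun k hk => Finset.sum_congr rfl fun i _ => by rw [e2 k hk i]
    rw [e4, e5, e3]
    ring

theorem disagreement_bound {N d : ℕ} (hN : 0 < N)
    (P : ℕ → Matrix (Fin N) (Fin N) ℝ)
    (hrs : ∀ t, (∀ i j, 0 ≤ P t i j) ∧ ∀ i, ∑ j, P t i j = 1)
    (C lam : ℝ) (hC : 0 < C) (hlam0 : 0 < lam) (hlam1 : lam < 1)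
    (htau : ∀ t₀ k : ℕ, tau (bprod P t₀ k) ≤ C * lam ^ k)
    (X G : ℕ → Matrix (Fin N) (Fin d) ℝ) (L : ℝ)
    (hG : ∀ t i, ∑ j, |G t i j| ≤ L)
    (Δ : ℕ → Fin N → ℝ) (hΔ : ∀ t i, 0 ≤ Δ t i)
    (M : ℝ) (hM : ∀ t i, Δ t i ≤ M)
    (hX : ∀ t i l, X (t + 1) i l = (∑ j, P t i j * X t j l) - Δ t i * G t i l)
    (b : ℕ → Fin N → ℝ) (B : ℝ)
    (hb1 : ∀ t, ∑ i, |b t i| ≤ B)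
    (hb0 : ∀ t, ∑ i, b t i = 0) :
    ∃ C' : ℝ, 0 < C' ∧ ∀ t : ℕ, 1 ≤ t →
      (∑ l, |∑ i, X t i l * b t i|) ≤
        C' * lam ^ t + C' * ∑ k ∈ Finset.range t, lam ^ (t - k - 1) * (⨆ i, Δ k i) := by
  set K₀ : ℝ := ∑ j, ∑ l, |X 0 j l| with hK₀
  have hK0row : ∀ j : Fin N, ∑ l, |X 0 j l| ≤ K₀ :=
    fun j => Finset.single_le_sum (f := fun j : Fin N => ∑ l, |X 0 j l|)
      (fun j' _ => Finset.sum_nonneg fun l _ => abs_nonneg _) (Finset.mem_univ j)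
  have hK0 : 0 ≤ K₀ :=
    Finset.sum_nonneg fun j _ => Finset.sum_nonneg fun l _ => abs_nonneg _
  have i0 : Fin N := ⟨0, hN⟩
  have hB : 0 ≤ B := le_trans (Finset.sum_nonneg fun i _ => abs_nonneg _) (hb1 0)
  have hL : 0 ≤ L := le_trans (Finset.sum_nonneg fun j _ => abs_nonneg _) (hG 0 i0)
  have hsup_le : ∀ (k : ℕ) (i : Fin N), Δ k i ≤ ⨆ i, Δ k i :=
    fun k i => le_ciSup (Set.Finite.bddAbove (Set.finite_range _)) i
  have hsup0 : ∀ k : ℕ, 0 ≤ ⨆ i, Δ k i :=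
    fun k => le_trans (hΔ k i0) (hsup_le k i0)
  refine ⟨C * B * K₀ + C * B * L + 1, by positivity, ?_⟩
  intro t _
  set C' : ℝ := C * B * K₀ + C * B * L + 1 with hC'
  have hid := unroll P X G Δ hX t (b t)
  have hu0b : ∑ j, |∑ i, b t i * bprod P 0 t i j| ≤ C * lam ^ t * B :=
    (key (b t) (hb0 t) (bprod P 0 t)).trans
      (mul_le_mul (htau 0 t) (hb1 t)
        (Finset.sum_nonneg fun i _ => abs_nonneg _) (by positivity))
  have hukb : ∀ k : ℕ, ∑ i, |∑ m, b t m * bprod P (k + 1) (t - (k + 1)) m i|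
      ≤ C * lam ^ (t - (k + 1)) * B :=
    fun k => (key (b t) (hb0 t) (bprod P (k + 1) (t - (k + 1)))).trans
      (mul_le_mul (htau (k + 1) (t - (k + 1))) (hb1 t)
        (Finset.sum_nonneg fun i _ => abs_nonneg _) (by positivity))
  have hT1 : ∑ l, |∑ j, (∑ i, b t i * bprod P 0 t i j) * X 0 j l|
      ≤ (C * B * K₀) * lam ^ t := by
    calc ∑ l, |∑ j, (∑ i, b t i * bprod P 0 t i j) * X 0 j l|
        ≤ ∑ l, ∑ j, |∑ i, b t i * bprod P 0 t i j| * |X 0 j l| :=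
          Finset.sum_le_sum fun l _ => (Finset.abs_sum_le_sum_abs _ _).trans
            (le_of_eq (Finset.sum_congr rfl fun j _ => abs_mul _ _))
      _ = ∑ j, |∑ i, b t i * bprod P 0 t i j| * ∑ l, |X 0 j l| := by
          rw [Finset.sum_comm]
          exact Finset.sum_congr rfl fun j _ => (Finset.mul_sum _ _ _).symm
      _ ≤ ∑ j, |∑ i, b t i * bprod P 0 t i j| * K₀ :=
          Finset.sum_le_sum fun j _ =>
            mul_le_mul_of_nonneg_left (hK0row j) (abs_nonneg _)
      _ = (∑ j, |∑ i, b t i * bprod P 0 t i j|) * K₀ := (Finset.sum_mul _ _ _).symm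
      _ ≤ (C * lam ^ t * B) * K₀ := mul_le_mul_of_nonneg_right hu0b hK0
      _ = (C * B * K₀) * lam ^ t := by ring
  have perk : ∀ k ∈ Finset.range t,
      ∑ l, |∑ i, (∑ m, b t m * bprod P (k + 1) (t - (k + 1)) m i) * (Δ k i * G k i l)|
        ≤ (C * B * L) * (lam ^ (t - k - 1) * (⨆ i, Δ k i)) := by
    intro k _
    calc ∑ l, |∑ i, (∑ m, b t m * bprod P (k + 1) (t - (k + 1)) m i) * (Δ k i * G k i l)|
        ≤ ∑ l, ∑ i, |∑ m, b t m * bprod P (k + 1) (t - (k + 1)) m i| * (Δ k i * |G k i l|) := by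
          apply Finset.sum_le_sum; intro l _
          refine (Finset.abs_sum_le_sum_abs _ _).trans (le_of_eq ?_)
          exact Finset.sum_congr rfl fun i _ => by
            rw [abs_mul, abs_mul, abs_of_nonneg (hΔ k i)]
      _ = ∑ i, |∑ m, b t m * bprod P (k + 1) (t - (k + 1)) m i| * Δ k i * ∑ l, |G k i l| := by
          rw [Finset.sum_comm]
          exact Finset.sum_congr rfl fun i _ => by
            rw [Finset.mul_sum]
            exact Finset.sum_congr rfl fun l _ => by ring
      _ ≤ ∑ i, |∑ m, b t m * bprod P (k + 1) (t - (k + 1)) m i| * Δ k i * L :=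
          Finset.sum_le_sum fun i _ => mul_le_mul_of_nonneg_left (hG k i)
            (mul_nonneg (abs_nonneg _) (hΔ k i))
      _ ≤ ∑ i, |∑ m, b t m * bprod P (k + 1) (t - (k + 1)) m i| * (⨆ i, Δ k i) * L :=
          Finset.sum_le_sum fun i _ => mul_le_mul_of_nonneg_right
            (mul_le_mul_of_nonneg_left (hsup_le k i) (abs_nonneg _)) hL
      _ = (∑ i, |∑ m, b t m * bprod P (k + 1) (t - (k + 1)) m i|) * ((⨆ i, Δ k i) * L) := by
          rw [Finset.sum_mul]
          exact Finset.sum_congr rfl fun i _ => by ring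
      _ ≤ (C * lam ^ (t - (k + 1)) * B) * ((⨆ i, Δ k i) * L) :=
          mul_le_mul_of_nonneg_right (hukb k) (mul_nonneg (hsup0 k) hL)
      _ = (C * B * L) * (lam ^ (t - k - 1) * (⨆ i, Δ k i)) := by
          rw [show t - (k + 1) = t - k - 1 from by omega]; ring
  have hT2 : ∑ l, |∑ k ∈ Finset.range t, ∑ i,
        (∑ m, b t m * bprod P (k + 1) (t - (k + 1)) m i) * (Δ k i * G k i l)|
      ≤ (C * B * L) * ∑ k ∈ Finset.range t, lam ^ (t - k - 1) * (⨆ i, Δ k i) := by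
    calc ∑ l, |∑ k ∈ Finset.range t, ∑ i,
          (∑ m, b t m * bprod P (k + 1) (t - (k + 1)) m i) * (Δ k i * G k i l)|
        ≤ ∑ l, ∑ k ∈ Finset.range t, |∑ i,
          (∑ m, b t m * bprod P (k + 1) (t - (k + 1)) m i) * (Δ k i * G k i l)| :=
          Finset.sum_le_sum fun l _ => Finset.abs_sum_le_sum_abs _ _
      _ = ∑ k ∈ Finset.range t, ∑ l, |∑ i,
          (∑ m, b t m * bprod P (k + 1) (t - (k + 1)) m i) * (Δ k i * G k i l)| :=
          Finset.sum_comm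
      _ ≤ ∑ k ∈ Finset.range t, (C * B * L) * (lam ^ (t - k - 1) * (⨆ i, Δ k i)) :=
          Finset.sum_le_sum perk
      _ = (C * B * L) * ∑ k ∈ Finset.range t, lam ^ (t - k - 1) * (⨆ i, Δ k i) :=
          (Finset.mul_sum _ _ _).symm
  have hrw : ∑ l, |∑ i, X t i l * b t i|
      = ∑ l, |(∑ j, (∑ i, b t i * bprod P 0 t i j) * X 0 j l) -
          ∑ k ∈ Finset.range t, ∑ i,
            (∑ m, b t m * bprod P (k + 1) (t - (k + 1)) m i) * (Δ k i * G k i l)| := by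
    apply Finset.sum_congr rfl
    intro l _
    rw [show ∑ i, X t i l * b t i = ∑ i, b t i * X t i l from
      Finset.sum_congr rfl fun i _ => mul_comm _ _, hid l]
  have hsplit : ∑ l, |∑ i, X t i l * b t i|
      ≤ (C * B * K₀) * lam ^ t +
        (C * B * L) * ∑ k ∈ Finset.range t, lam ^ (t - k - 1) * (⨆ i, Δ k i) := by
    rw [hrw]
    calc ∑ l, |(∑ j, (∑ i, b t i * bprod P 0 t i j) * X 0 j l) -
          ∑ k ∈ Finset.range t, ∑ i,
            (∑ m, b t m * bprod P (k + 1) (t - (k + 1)) m i) * (Δ k i * G k i l)|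
        ≤ ∑ l, (|∑ j, (∑ i, b t i * bprod P 0 t i j) * X 0 j l| +
          |∑ k ∈ Finset.range t, ∑ i,
            (∑ m, b t m * bprod P (k + 1) (t - (k + 1)) m i) * (Δ k i * G k i l)|) :=
          Finset.sum_le_sum fun l _ => abs_sub _ _
      _ = (∑ l, |∑ j, (∑ i, b t i * bprod P 0 t i j) * X 0 j l|) +
          ∑ l, |∑ k ∈ Finset.range t, ∑ i,
            (∑ m, b t m * bprod P (k + 1) (t - (k + 1)) m i) * (Δ k i * G k i l)| :=
          Finset.sum_add_distrib
      _ ≤ _ := add_le_add hT1 hT2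
  refine hsplit.trans (add_le_add ?_ ?_)
  · apply mul_le_mul_of_nonneg_right _ (le_of_lt (pow_pos hlam0 t))
    have h1 : 0 ≤ C * B * L := mul_nonneg (mul_nonneg hC.le hB) hL
    linarith [hC'.le]
  · apply mul_le_mul_of_nonneg_right _
      (Finset.sum_nonneg fun k _ => mul_nonneg (le_of_lt (pow_pos hlam0 _)) (hsup0 k))
    have h1 : 0 ≤ C * B * K₀ := mul_nonneg (mul_nonneg hC.le hB) hK0
    linarith [hC'.le]
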